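/- The sampled safe set is control invariant: if x̂ is an equilibrium (x̂ ∈ X, 0 ∈ U, and A x̂ = x̂) and SS is the sampled safe set of a finite nonempty family of admissible trajectories to x̂, then SS ⊆ X, x̂ ∈ SS, and for every z ∈ SS there exists u ∈ U such that A z + B u ∈ SS. -/
import Mathlib


open Matrix

/-- An admissible trajectory of length `T` to `xhat`. -/
def AdmTraj {n m : ℕ} (A : Matrix (Fin n) (Fin n) ℝ) (B : Matrix (Fin n) (Fin m) ℝ)
    (X : Set (Fin n → ℝ)) (U : Set (Fin m → ℝ)) (xhat : Fin n → ℝ) (T : ℕ)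
    (x : ℕ → Fin n → ℝ) (u : ℕ → Fin m → ℝ) : Prop :=
  (∀ t < T, x (t + 1) = A.mulVec (x t) + B.mulVec (u t)) ∧
  (∀ t ≤ T, x t ∈ X) ∧ (∀ t < T, u t ∈ U) ∧ x T = xhat

/-- The sampled safe set of a family of trajectories: all visited states. -/
def sampledSafeSet {n : ℕ} {ι : Type} (T : ι → ℕ)
    (xs : ι → ℕ → Fin n → ℝ) : Set (Fin n → ℝ) :=
  {z | ∃ i, ∃ t ≤ T i, xs i t = z}

/-- the sampled safe set of a finite nonempty family of admissible trajectories
to an equilibrium `xhat` is contained in `X`, contains `xhat`, and is control invariant. -/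
theorem sampled_safe_set_control_invariant {n m : ℕ}
    (A : Matrix (Fin n) (Fin n) ℝ) (B : Matrix (Fin n) (Fin m) ℝ)
    (X : Set (Fin n → ℝ)) (U : Set (Fin m → ℝ)) (xhat : Fin n → ℝ)
    (hxX : xhat ∈ X) (h0U : (0 : Fin m → ℝ) ∈ U) (heq : A.mulVec xhat = xhat)
    {ι : Type} [Fintype ι] [Nonempty ι]
    (T : ι → ℕ) (xs : ι → ℕ → Fin n → ℝ) (us : ι → ℕ → Fin m → ℝ)
    (hadm : ∀ i, AdmTraj A B X U xhat (T i) (xs i) (us i)) :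
    sampledSafeSet T xs ⊆ X ∧
    xhat ∈ sampledSafeSet T xs ∧
    ∀ z ∈ sampledSafeSet T xs, ∃ u ∈ U,
      A.mulVec z + B.mulVec u ∈ sampledSafeSet T xs := by
  refine ⟨?_, ?_, ?_⟩
  · rintro z ⟨i, t, ht, rfl⟩
    exact (hadm i).2.1 t ht
  · obtain ⟨i⟩ := ‹Nonempty ι›
    exact ⟨i, T i, le_refl _, (hadm i).2.2.2⟩
  · rintro z ⟨i, t, ht, rfl⟩
    rcases lt_or_eq_of_le ht with h | h
    · exact ⟨us i t, (hadm i).2.2.1 t h, i, t + 1, h, (hadm i).1 t h⟩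
    · refine ⟨0, h0U, i, T i, le_refl _, ?_⟩
      rw [h, (hadm i).2.2.2, heq, Matrix.mulVec_zero, add_zero]
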